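/- Let κ be a strongly inaccessible cardinal and ⟨A_α : α < κ⟩ a potential ◊_κ sequence, and let F be a filter on the diamond killing poset Q (F is nonempty, upward closed, and any two members of F have a common lower bound in F) such that F ∩ D_γ ≠ ∅ for every γ < κ. Then, setting S = ⋃{s : (s,c) ∈ F} and C = ⋃{c : (s,c) ∈ F}, the set C is club in κ (unbounded and contains all its limit points below κ) and S ∩ α ≠ A_α for every strongly inaccessible α ∈ C; in particular, the set {α < κ : α is strongly inaccessible and S ∩ α = A_α} is not stationary in κ. -/

import Mathlib

open Set

/-- `C` is unbounded in `κ`. -/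
def IsUnboundedIn (κ : Ordinal.{0}) (C : Set Ordinal.{0}) : Prop :=
  ∀ α < κ, ∃ β ∈ C, α < β

/-- `C` contains all of its limit points below `κ`. -/
def IsClosedIn (κ : Ordinal.{0}) (C : Set Ordinal.{0}) : Prop :=
  ∀ α < κ, α ≠ 0 → (∀ β < α, ∃ γ ∈ C, β < γ ∧ γ < α) → α ∈ C

/-- `C ⊆ κ` is club in `κ`: unbounded and closed. -/
def IsClubIn (κ : Ordinal.{0}) (C : Set Ordinal.{0}) : Prop :=
  C ⊆ Set.Iio κ ∧ IsUnboundedIn κ C ∧ IsClosedIn κ C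

/-- `S` is stationary in `κ`: it meets every club subset of `κ`. -/
def IsStationaryIn (κ : Ordinal.{0}) (S : Set Ordinal.{0}) : Prop :=
  ∀ C, IsClubIn κ C → (S ∩ C).Nonempty

/-- The ordinal `α` is an infinite regular cardinal. -/
def IsRegOrd (α : Ordinal.{0}) : Prop :=
  ∃ c : Cardinal.{0}, c.IsRegular ∧ α = c.ord

/-- The ordinal `α` is a strongly inaccessible cardinal. -/
def IsInaccOrd (α : Ordinal.{0}) : Prop :=
  ∃ c : Cardinal.{0}, c.IsInaccessible ∧ α = c.ord

/-- `c` is a closed bounded subset of `κ`. -/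
def IsClosedBddIn (κ : Ordinal.{0}) (c : Set Ordinal.{0}) : Prop :=
  c ⊆ Set.Iio κ ∧ (∃ β, β < κ ∧ ∀ α ∈ c, α ≤ β) ∧ IsClosedIn κ c

/-- `p = (s, c)` is a condition of the diamond killing poset for the potential
`◊_κ` sequence `A`: `c` is a closed bounded subset of `κ`, `s ⊆ sup c`, and
`s ∩ α ≠ A α` for every strongly inaccessible `α ∈ c`. -/
def IsCond (κ : Ordinal.{0}) (A : Ordinal.{0} → Set Ordinal.{0})
    (p : Set Ordinal.{0} × Set Ordinal.{0}) : Prop :=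
  IsClosedBddIn κ p.2 ∧ p.1 ⊆ Set.Iio (sSup p.2) ∧
    ∀ α ∈ p.2, IsInaccOrd α → p.1 ∩ Set.Iio α ≠ A α

/-- The ordering of the diamond killing poset: `(s', c') ≤ (s, c)` iff
`s' ∩ sup c = s` and `c' ∩ (sup c + 1) = c`. -/
def CondLE (p q : Set Ordinal.{0} × Set Ordinal.{0}) : Prop :=
  p.1 ∩ Set.Iio (sSup q.2) = q.1 ∧ p.2 ∩ Set.Iic (sSup q.2) = q.2

/-- `D_γ`: the set of conditions `(s, c)` with `c \ γ ≠ ∅`. -/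
def DSet (κ : Ordinal.{0}) (A : Ordinal.{0} → Set Ordinal.{0}) (γ : Ordinal.{0}) :
    Set (Set Ordinal.{0} × Set Ordinal.{0}) :=
  {p | IsCond κ A p ∧ (p.2 \ Set.Iio γ).Nonempty}

/-- For a strongly inaccessible `κ`, a potential `◊_κ` sequence `A`, and a
filter `F` on the diamond killing poset meeting every `D_γ` for `γ < κ`:
setting `S = ⋃ {s : (s,c) ∈ F}` and `C = ⋃ {c : (s,c) ∈ F}`, the set `C` is
club in `κ`, `S ∩ α ≠ A_α` for every strongly inaccessible `α ∈ C`, and in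
particular `{α < κ : α strongly inaccessible, S ∩ α = A_α}` is not stationary. -/
theorem filter_kills_sequence (κ : Cardinal.{0}) (hκ : κ.IsInaccessible)
    (A : Ordinal.{0} → Set Ordinal.{0}) (hA : ∀ α < κ.ord, A α ⊆ Set.Iio α)
    (F : Set (Set Ordinal.{0} × Set Ordinal.{0}))
    (hFcond : ∀ p ∈ F, IsCond κ.ord A p)
    (hFne : F.Nonempty)
    (hFup : ∀ p ∈ F, ∀ q, IsCond κ.ord A q → CondLE p q → q ∈ F)
    (hFdir : ∀ p ∈ F, ∀ q ∈ F, ∃ r ∈ F, CondLE r p ∧ CondLE r q)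
    (hFmeets : ∀ γ < κ.ord, (F ∩ DSet κ.ord A γ).Nonempty) :
    ∀ S C : Set Ordinal.{0},
      S = (⋃ p ∈ F, p.1) → C = (⋃ p ∈ F, p.2) →
      IsClubIn κ.ord C ∧
      (∀ α ∈ C, IsInaccOrd α → S ∩ Set.Iio α ≠ A α) ∧
      ¬ IsStationaryIn κ.ord
          {α | α < κ.ord ∧ IsInaccOrd α ∧ S ∩ Set.Iio α = A α} := by

  intro S C hS hC
  have hκlim : Order.IsSuccLimit κ.ord := Cardinal.isSuccLimit_ord hκ.1.le
  have hbdd : ∀ p ∈ F, BddAbove p.2 := by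
    intro p hp
    obtain ⟨β, _, hβ⟩ := (hFcond p hp).1.2.1
    exact ⟨β, hβ⟩
  have hle : ∀ p ∈ F, ∀ α ∈ p.2, α ≤ sSup p.2 :=
    fun p hp α hα => le_csSup (hbdd p hp) hα
  have hcoh2 : ∀ p ∈ F, ∀ q ∈ F, ∀ δ ∈ q.2, δ ≤ sSup p.2 → δ ∈ p.2 := by
    intro p hp q hq δ hδ hδle
    obtain ⟨r, hr, hrp, hrq⟩ := hFdir p hp q hq
    have hδr : δ ∈ r.2 := by
      rw [← hrq.2] at hδ; exact hδ.1
    rw [← hrp.2]; exact ⟨hδr, hδle⟩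
  have hcoh1 : ∀ p ∈ F, ∀ q ∈ F, ∀ δ ∈ q.1, δ < sSup p.2 → δ ∈ p.1 := by
    intro p hp q hq δ hδ hδlt
    obtain ⟨r, hr, hrp, hrq⟩ := hFdir p hp q hq
    have hδr : δ ∈ r.1 := by
      rw [← hrq.1] at hδ; exact hδ.1
    rw [← hrp.1]; exact ⟨hδr, hδlt⟩
  have hSp : ∀ p ∈ F, S ∩ Set.Iio (sSup p.2) = p.1 := by
    intro p hp
    ext δ
    constructor
    · rintro ⟨hδS, hδlt⟩
      rw [hS] at hδS
      obtain ⟨q, hq, hδq⟩ := Set.mem_iUnion₂.1 hδS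
      exact hcoh1 p hp q hq δ hδq hδlt
    · intro h
      exact ⟨by rw [hS]; exact Set.mem_biUnion hp h, (hFcond p hp).2.1 h⟩
  have hCsub : C ⊆ Set.Iio κ.ord := by
    intro δ hδ
    rw [hC] at hδ
    obtain ⟨q, hq, hδq⟩ := Set.mem_iUnion₂.1 hδ
    exact (hFcond q hq).1.1 hδq
  have hkill : ∀ α ∈ C, IsInaccOrd α → S ∩ Set.Iio α ≠ A α := by
    intro α hαC hin
    rw [hC] at hαC
    obtain ⟨q, hq, hαq⟩ := Set.mem_iUnion₂.1 hαC
    have hαsup : α ≤ sSup q.2 := hle q hq α hαq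
    have heq : S ∩ Set.Iio α = q.1 ∩ Set.Iio α := by
      rw [← hSp q hq]
      ext δ
      simp only [Set.mem_inter_iff, Set.mem_Iio]
      constructor
      · rintro ⟨h1, h2⟩; exact ⟨⟨h1, lt_of_lt_of_le h2 hαsup⟩, h2⟩
      · rintro ⟨⟨h1, _⟩, h3⟩; exact ⟨h1, h3⟩
    rw [heq]
    exact (hFcond q hq).2.2 α hαq hin
  have hclub : IsClubIn κ.ord C := by
    refine ⟨hCsub, ?_, ?_⟩
    · intro α hα
      have hα1 : α + 1 < κ.ord := by
        rw [Ordinal.add_one_eq_succ]; exact hκlim.succ_lt hα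
      obtain ⟨p, hpF, _, β, hβ⟩ := hFmeets (α + 1) hα1
      have hβ2 : β ∈ p.2 := hβ.1
      have hβge : α + 1 ≤ β := not_lt.1 hβ.2
      refine ⟨β, ?_, ?_⟩
      · rw [hC]; exact Set.mem_biUnion hpF hβ2
      · calc α < α + 1 := by rw [Ordinal.add_one_eq_succ]; exact Order.lt_succ α
          _ ≤ β := hβge
    · intro α hα hα0 hlim
      obtain ⟨p, hpF, _, β, hβ⟩ := hFmeets α hα
      have hβ2 : β ∈ p.2 := hβ.1
      have hαβ : α ≤ β := not_lt.1 hβ.2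
      have hαsup : α ≤ sSup p.2 := le_trans hαβ (hle p hpF β hβ2)
      have hαp : α ∈ p.2 := by
        apply (hFcond p hpF).1.2.2 α hα hα0
        intro γ hγ
        obtain ⟨δ, hδC, hδγ, hδα⟩ := hlim γ hγ
        rw [hC] at hδC
        obtain ⟨q, hq, hδq⟩ := Set.mem_iUnion₂.1 hδC
        exact ⟨δ, hcoh2 p hpF q hq δ hδq (le_trans hδα.le hαsup), hδγ, hδα⟩
      rw [hC]; exact Set.mem_biUnion hpF hαp
  refine ⟨hclub, hkill, ?_⟩
  intro hstat
  obtain ⟨α, ⟨hακ, hin, heq⟩, hαC⟩ := hstat C hclub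
  exact hkill α hαC hin heq
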